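/- There exists a universal constant C > 0 with the following property. Let Γ be a countable discrete group and f ∈ ℤΓ be such that the convolution operator T_f on ℓ²(Γ) is positive and invertible. Then for every λ > 1 and ε > 0 there is δ > 0 such that for every nonempty finite F ⊆ Γ with |K_f·K_f·F ∖ F| ≤ δ|F|: the quotient group ℤ^F/f_Fℤ^F is finite, and every finite subset E ⊆ X_f satisfying d_{F,2}(x,y) > ε for all distinct x,y ∈ E has card(E) ≤ C · λ^{|F|} · card(ℤ^F/f_Fℤ^F). -/

import Mathlib

open scoped Pointwise ENNReal symmDiff
open Filter

noncomputable section

/-- `ℓ²(Γ)` with complex coefficients. -/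
abbrev l2 (Γ : Type*) : Type _ := lp (fun _ : Γ => ℂ) 2

/-- `T` is the operator of left convolution by `f ∈ ℤΓ` on `ℓ²(Γ)`. -/
def IsConvOp {Γ : Type*} [Group Γ] (f : MonoidAlgebra ℤ Γ) (T : l2 Γ →L[ℂ] l2 Γ) : Prop :=
  ∀ (x : l2 Γ) (γ' : Γ), T x γ' = ∑ γ ∈ f.coeff.support, (f.coeff γ : ℂ) * x (γ⁻¹ * γ')

/-- The Fuglede-Kadison determinant of an operator `T` on `ℓ²(Γ)` with respect to the
canonical trace: `exp((1/2)·Re⟨(log(T*T)) δ_e, δ_e⟩)`. -/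
def fkDet {Γ : Type*} [Group Γ] (T : l2 Γ →L[ℂ] l2 Γ) : ℝ :=
  haveI := Classical.decEq Γ
  haveI : ContinuousFunctionalCalculus ℝ (l2 Γ →L[ℂ] l2 Γ) IsSelfAdjoint :=
    IsSelfAdjoint.instContinuousFunctionalCalculus
  Real.exp ((1 / 2) *
    (inner ℂ ((cfc Real.log (star T * T)) (lp.single (E := fun _ : Γ => ℂ) 2 (1 : Γ) 1))
      (lp.single (E := fun _ : Γ => ℂ) 2 (1 : Γ) (1 : ℂ)) : ℂ).re)

/-- `X_f = {h ∈ (ℝ/ℤ)^Γ : f h = 0}`. -/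
def Xset {Γ : Type*} [Group Γ] (f : MonoidAlgebra ℤ Γ) : Set (Γ → AddCircle (1 : ℝ)) :=
  {h | ∀ γ' : Γ, ∑ γ ∈ f.coeff.support, f.coeff γ • h (γ⁻¹ * γ') = 0}

/-- The `ℓ^∞` dynamical distance `d_{F,∞}(x,y) = max_{γ ∈ F} ϑ(x_γ, y_γ)` on `(ℝ/ℤ)^Γ`. -/
def dInf {Γ : Type*} (F : Finset Γ) (x y : Γ → AddCircle (1 : ℝ)) : ℝ :=
  if hF : F.Nonempty then F.sup' hF fun γ => dist (x γ) (y γ) else 0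

/-- The `ℓ²` dynamical distance `d_{F,2}(x,y) = (|F|⁻¹ ∑_{γ∈F} ϑ(x_γ,y_γ)²)^{1/2}`. -/
def d2 {Γ : Type*} (F : Finset Γ) (x y : Γ → AddCircle (1 : ℝ)) : ℝ :=
  Real.sqrt ((F.card : ℝ)⁻¹ * ∑ γ ∈ F, dist (x γ) (y γ) ^ 2)

/-- `‖f‖₁ = ∑_γ |f_γ|`. -/
def l1norm {Γ : Type*} [Group Γ] (f : MonoidAlgebra ℤ Γ) : ℝ :=
  ∑ γ ∈ f.coeff.support, |(f.coeff γ : ℝ)|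

/-- `K_f = supp f ∪ supp f* ∪ {e}`. -/
def Kf {Γ : Type*} [Group Γ] [DecidableEq Γ] (f : MonoidAlgebra ℤ Γ) : Finset Γ :=
  f.coeff.support ∪ f.coeff.support.image (·⁻¹) ∪ {1}

/-- The compression `f_F` of the convolution operator of `f` to a finite `F ⊆ Γ`, as an
`F × F` integer matrix with entries `(f_F)_{γ,γ'} = f (γ γ'⁻¹)`. -/
def fMat {Γ : Type*} [Group Γ] (f : MonoidAlgebra ℤ Γ) (F : Finset Γ) : Matrix ↥F ↥F ℤ :=
  Matrix.of fun γ γ' => f.coeff ((γ : Γ) * (γ' : Γ)⁻¹)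

/-- Maximal cardinality (in `[0,∞]`) of an `[F,∞,ε]`-separated subset of `X_f`. -/
def sepCard {Γ : Type*} [Group Γ] (f : MonoidAlgebra ℤ Γ) (F : Finset Γ) (ε : ℝ) : ℝ≥0∞ :=
  ⨆ (E : Finset (Γ → AddCircle (1 : ℝ)))
    (_ : ↑E ⊆ Xset f ∧ ∀ x ∈ E, ∀ y ∈ E, x ≠ y → ε < dInf F x y), (E.card : ℝ≥0∞)

/-- Minimal cardinality (in `[0,∞]`) of an `[F,∞,ε]`-spanning subset of `X_f`. -/
def spanCard {Γ : Type*} [Group Γ] (f : MonoidAlgebra ℤ Γ) (F : Finset Γ) (ε : ℝ) : ℝ≥0∞ :=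
  ⨅ (E : Finset (Γ → AddCircle (1 : ℝ)))
    (_ : ↑E ⊆ Xset f ∧ ∀ x ∈ Xset f, ∃ y ∈ E, dInf F x y ≤ ε), (E.card : ℝ≥0∞)

/-- A left Følner sequence: a sequence of nonempty finite subsets `F n` with
`|γ F_n △ F_n| / |F_n| → 0` for every `γ`. -/
def IsFolnerSeq {Γ : Type*} [Group Γ] [DecidableEq Γ] (F : ℕ → Finset Γ) : Prop :=
  (∀ n, (F n).Nonempty) ∧ ∀ γ : Γ,
    Tendsto (fun n => ((((F n).image (γ * ·)) ∆ (F n)).card : ℝ) / ((F n).card : ℝ))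
      atTop (nhds 0)

universe u

section AuxLemmas

variable {Γ : Type*} [Group Γ] [DecidableEq Γ]

/-- Reindexing a convolution sum, for a function vanishing off `F`. -/
theorem conv_reindex_zero (f : MonoidAlgebra ℤ Γ) {M : Type*} [AddCommGroup M]
    (φ : Γ → M) (F : Finset Γ) (hφ : ∀ β : Γ, β ∉ F → φ β = 0) (γ' : Γ) :
    ∑ s ∈ f.coeff.support, f.coeff s • φ (s⁻¹ * γ') = ∑ β ∈ F, f.coeff (γ' * β⁻¹) • φ β := by
  classical
  have hz1 : ∀ s ∈ f.coeff.support, f.coeff s • φ (s⁻¹ * γ') ≠ 0 → s⁻¹ * γ' ∈ F := by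
    intro s _ hne
    by_contra hmem
    exact hne (by rw [hφ _ hmem, smul_zero])
  have hz2 : ∀ β ∈ F, f.coeff (γ' * β⁻¹) • φ β ≠ 0 → γ' * β⁻¹ ∈ f.coeff.support := by
    intro β _ hne
    by_contra hmem
    exact hne (by rw [Finsupp.notMem_support_iff.mp hmem, zero_smul])
  rw [← Finset.sum_filter_of_ne hz1, ← Finset.sum_filter_of_ne hz2]
  refine Finset.sum_nbij' (fun s => s⁻¹ * γ') (fun β => γ' * β⁻¹) ?_ ?_ ?_ ?_ ?_
  · intro s hs
    simp only [Finset.mem_filter] at hs ⊢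
    refine ⟨hs.2, ?_⟩
    have he : γ' * (s⁻¹ * γ')⁻¹ = s := by group
    rw [he]; exact hs.1
  · intro β hβ
    simp only [Finset.mem_filter] at hβ ⊢
    refine ⟨hβ.2, ?_⟩
    have he : (γ' * β⁻¹)⁻¹ * γ' = β := by group
    rw [he]; exact hβ.1
  · intro s _; group
  · intro β _; group
  · intro s _
    have he : γ' * (s⁻¹ * γ')⁻¹ = s := by group
    rw [he]

/-- Reindexing a convolution sum, at a point all of whose translates lie in `F`. -/
theorem conv_reindex_mem (f : MonoidAlgebra ℤ Γ) {M : Type*} [AddCommGroup M]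
    (φ : Γ → M) (F : Finset Γ) (γ' : Γ) (hγ' : ∀ s ∈ f.coeff.support, s⁻¹ * γ' ∈ F) :
    ∑ s ∈ f.coeff.support, f.coeff s • φ (s⁻¹ * γ') = ∑ β ∈ F, f.coeff (γ' * β⁻¹) • φ β := by
  classical
  have hz2 : ∀ β ∈ F, f.coeff (γ' * β⁻¹) • φ β ≠ 0 → γ' * β⁻¹ ∈ f.coeff.support := by
    intro β _ hne
    by_contra hmem
    exact hne (by rw [Finsupp.notMem_support_iff.mp hmem, zero_smul])
  rw [← Finset.sum_filter_of_ne hz2]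
  refine Finset.sum_nbij' (fun s => s⁻¹ * γ') (fun β => γ' * β⁻¹) ?_ ?_ ?_ ?_ ?_
  · intro s hs
    simp only [Finset.mem_filter]
    refine ⟨hγ' s hs, ?_⟩
    have he : γ' * (s⁻¹ * γ')⁻¹ = s := by group
    rw [he]; exact hs
  · intro β hβ
    simp only [Finset.mem_filter] at hβ
    exact hβ.2
  · intro s _; group
  · intro β _; group
  · intro s _
    have he : γ' * (s⁻¹ * γ')⁻¹ = s := by group
    rw [he]

end AuxLemmas

section OpAux

open RCLike in
/-- Operator Cauchy-Schwarz inequality for a positive operator. -/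
theorem op_cauchy_schwarz {H : Type*} [NormedAddCommGroup H] [InnerProductSpace ℂ H]
    [CompleteSpace H] {T : H →L[ℂ] H} (hT : T.IsPositive) (x : H) :
    ‖T x‖ ^ 2 ≤ ‖T‖ * RCLike.re (inner ℂ (T x) x : ℂ) := by
  have hre : ∀ z : H, (0:ℝ) ≤ RCLike.re (inner ℂ (T z) z : ℂ) := fun z => hT.2 z
  by_cases hTx : T x = 0
  · rw [hTx]
    simp [inner_zero_left]
  · set y := T x with hy
    have hyx : (inner ℂ (T y) x : ℂ) = inner ℂ y y := by
      have hsa : ContinuousLinearMap.adjoint T = T := by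
        rw [← ContinuousLinearMap.star_eq_adjoint]; exact hT.isSelfAdjoint
      calc (inner ℂ (T y) x : ℂ) = inner ℂ (ContinuousLinearMap.adjoint T y) x := by rw [hsa]
        _ = inner ℂ y (T x) := ContinuousLinearMap.adjoint_inner_left T x y
        _ = inner ℂ y y := by rw [← hy]
    have key : ∀ t : ℝ, 0 ≤ (RCLike.re (inner ℂ (T y) y : ℂ)) * (t * t)
        + (-(2 * ‖y‖ ^ 2)) * t + RCLike.re (inner ℂ (T x) x : ℂ) := by
      intro t
      have h0 : (0:ℝ) ≤ RCLike.re (inner ℂ (T (x - (t : ℂ) • y)) (x - (t : ℂ) • y) : ℂ) :=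
        hre _
      have expand : (inner ℂ (T (x - (t : ℂ) • y)) (x - (t : ℂ) • y) : ℂ)
          = inner ℂ (T x) x - (t:ℂ) * inner ℂ y y - (t:ℂ) * inner ℂ y y
            + (t:ℂ) * ((t:ℂ) * inner ℂ (T y) y) := by
        have h1 : T (x - (t:ℂ) • y) = T x - (t:ℂ) • T y := by rw [map_sub, map_smul]
        rw [h1]
        simp only [inner_sub_left, inner_sub_right, inner_smul_left, inner_smul_right,
          Complex.conj_ofReal]
        rw [hyx, ← hy]
        ring
      rw [expand] at h0
      simp only [map_add, map_sub] at h0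
      have e1 : RCLike.re ((t:ℂ) * (inner ℂ y y : ℂ)) = t * ‖y‖ ^ 2 := by
        rw [RCLike.re_to_complex, Complex.re_ofReal_mul, ← RCLike.re_to_complex,
          inner_self_eq_norm_sq]
      have e2 : RCLike.re ((t:ℂ) * ((t:ℂ) * (inner ℂ (T y) y : ℂ)))
          = t * (t * RCLike.re (inner ℂ (T y) y : ℂ)) := by
        rw [RCLike.re_to_complex, Complex.re_ofReal_mul, Complex.re_ofReal_mul]
        rfl
      rw [e1, e2] at h0
      nlinarith [h0]
    have hd := discrim_le_zero key
    rw [discrim] at hd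
    have hb : RCLike.re (inner ℂ (T y) y : ℂ) ≤ ‖T‖ * ‖y‖ ^ 2 := by
      calc RCLike.re (inner ℂ (T y) y : ℂ) ≤ ‖(inner ℂ (T y) y : ℂ)‖ := RCLike.re_le_norm _
        _ ≤ ‖T y‖ * ‖y‖ := norm_inner_le_norm _ _
        _ ≤ (‖T‖ * ‖y‖) * ‖y‖ :=
            mul_le_mul_of_nonneg_right (T.le_opNorm y) (norm_nonneg y)
        _ = ‖T‖ * ‖y‖ ^ 2 := by ring
    have hy0 : y ≠ 0 := hTx
    have hypos : (0:ℝ) < ‖y‖ ^ 2 := pow_pos (norm_pos_iff.mpr hy0) 2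
    nlinarith [hre x, hd, hb, hypos]

/-- A positive invertible operator is coercive. -/
theorem op_coercive {H : Type*} [NormedAddCommGroup H] [InnerProductSpace ℂ H]
    [CompleteSpace H] {T : H →L[ℂ] H} (hT : T.IsPositive) (hU : IsUnit T) :
    ∃ c : ℝ, 0 < c ∧ ∀ x : H, c * ‖x‖ ^ 2 ≤ RCLike.re (inner ℂ (T x) x : ℂ) := by
  obtain ⟨u, hu⟩ := hU
  set S : H →L[ℂ] H := ((u⁻¹ : (H →L[ℂ] H)ˣ) : H →L[ℂ] H) with hS
  have hSx : ∀ x : H, S (T x) = x := by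
    intro x
    have : (S * T) x = (1 : H →L[ℂ] H) x := by
      rw [hS, ← hu, Units.inv_mul]
    simpa using this
  refine ⟨((‖S‖ + 1) ^ 2 * (‖T‖ + 1))⁻¹, by positivity, fun x => ?_⟩
  have h1 : ‖x‖ ≤ ‖S‖ * ‖T x‖ := by
    conv_lhs => rw [← hSx x]
    exact S.le_opNorm _
  have h2 := op_cauchy_schwarz hT x
  have h3 : (0:ℝ) ≤ RCLike.re (inner ℂ (T x) x : ℂ) := hT.2 x
  rw [inv_mul_le_iff₀ (by positivity)]
  nlinarith [norm_nonneg x, norm_nonneg S, norm_nonneg T, norm_nonneg (T x), h1, h2, h3]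

theorem cast_mulVec {n : Type*} [Fintype n] (A : Matrix n n ℤ) (w : n → ℤ) (i : n) :
    ((A.map (Int.cast : ℤ → ℝ)).mulVec (fun j => (w j : ℝ))) i = ((A.mulVec w) i : ℝ) := by
  simp only [Matrix.mulVec, dotProduct, Matrix.map_apply]
  push_cast
  rfl

end OpAux

section MatrixAux

variable {Γ : Type u} [Group Γ] [DecidableEq Γ]

/-- Coercivity transfers from the convolution operator to its compressions. -/
theorem matrix_coercive (f : MonoidAlgebra ℤ Γ) (T : l2 Γ →L[ℂ] l2 Γ)
    (hconv : IsConvOp f T) {c : ℝ}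
    (hc : ∀ x : l2 Γ, c * ‖x‖ ^ 2 ≤ RCLike.re (inner ℂ (T x) x : ℂ))
    (F : Finset Γ) (v : ↥F → ℝ) :
    c * ∑ γ : ↥F, v γ ^ 2
      ≤ ∑ γ : ↥F, v γ * (((fMat f F).map (Int.cast : ℤ → ℝ)).mulVec v) γ := by
  classical
  set x : l2 Γ := ∑ γ : ↥F, (v γ : ℂ) • lp.single 2 (γ : Γ) (1:ℂ) with hxdef
  have hxeval : ∀ β : Γ, x β = if hβ : β ∈ F then (v ⟨β, hβ⟩ : ℂ) else 0 := by
    intro β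
    have hcoe : (x : Γ → ℂ) β
        = ∑ γ : ↥F, ((v γ : ℂ) • (lp.single 2 (γ:Γ) (1:ℂ) : l2 Γ)) β := by
      rw [hxdef, lp.coeFn_sum, Finset.sum_apply]
    rw [hcoe]
    by_cases hβ : β ∈ F
    · rw [dif_pos hβ]
      rw [Finset.sum_eq_single (⟨β, hβ⟩ : ↥F)]
      · simp [-Complex.coe_smul, lp.coeFn_smul, lp.single_apply]
      · intro γ _ hne
        have : β ≠ (γ : Γ) := by
          intro h; exact hne (by ext; exact h.symm)
        simp [-Complex.coe_smul, lp.coeFn_smul, lp.single_apply, Pi.single_apply, this]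
      · intro h; exact absurd (Finset.mem_univ _) h
    · rw [dif_neg hβ]
      refine Finset.sum_eq_zero fun γ _ => ?_
      have : β ≠ (γ : Γ) := fun h => hβ (h ▸ γ.2)
      simp [-Complex.coe_smul, lp.coeFn_smul, lp.single_apply, Pi.single_apply, this]
  have hTxeval : ∀ γ : ↥F,
      T x (γ : Γ) = ((((fMat f F).map (Int.cast : ℤ → ℝ)).mulVec v) γ : ℝ) := by
    intro γ
    rw [hconv x (γ : Γ)]
    have hre := conv_reindex_zero f (M := ℂ) (fun β => x β) F
      (fun β hβ => by show (x : Γ → ℂ) β = 0; rw [hxeval, dif_neg hβ]) (γ : Γ)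
    simp only [zsmul_eq_mul] at hre
    rw [hre]
    have : ∀ β : ↥F, ((f.coeff ((γ:Γ) * (β:Γ)⁻¹) : ℂ)) * x (β:Γ)
        = (((f.coeff ((γ:Γ) * (β:Γ)⁻¹) : ℤ) : ℝ) * v β : ℝ) := by
      intro β
      rw [hxeval]
      rw [dif_pos β.2]
      push_cast
      ring
    rw [← Finset.sum_coe_sort F (fun β => ((f.coeff ((γ:Γ) * β⁻¹) : ℂ)) * x β)]
    rw [Finset.sum_congr rfl (fun β _ => this β)]
    rw [← Complex.ofReal_sum]
    norm_cast
  have hinner : ∀ g : l2 Γ,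
      (inner ℂ g x : ℂ) = ∑ γ : ↥F, (v γ : ℂ) * (starRingEnd ℂ) (g (γ:Γ)) := by
    intro g
    rw [hxdef, inner_sum]
    refine Finset.sum_congr rfl fun γ _ => ?_
    rw [inner_smul_right, lp.inner_single_right]
    simp only [RCLike.inner_apply, mul_one, one_mul]
  have hxx : (inner ℂ x x : ℂ) = ((∑ γ : ↥F, v γ ^ 2 : ℝ) : ℂ) := by
    rw [hinner x]
    rw [Complex.ofReal_sum]
    refine Finset.sum_congr rfl fun γ _ => ?_
    rw [hxeval, dif_pos γ.2, Complex.conj_ofReal]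
    push_cast
    ring
  have hTxx : (inner ℂ (T x) x : ℂ)
      = ((∑ γ : ↥F, v γ * (((fMat f F).map (Int.cast : ℤ → ℝ)).mulVec v) γ : ℝ) : ℂ) := by
    rw [hinner (T x)]
    rw [Complex.ofReal_sum]
    refine Finset.sum_congr rfl fun γ _ => ?_
    rw [hTxeval γ, Complex.conj_ofReal]
    push_cast
    ring
  have hnorm : ‖x‖ ^ 2 = ∑ γ : ↥F, v γ ^ 2 := by
    rw [← inner_self_eq_norm_sq (𝕜 := ℂ) x, hxx]
    exact Complex.ofReal_re _
  have := hc x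
  rw [hnorm, hTxx] at this
  simpa using this

end MatrixAux

set_option maxHeartbeats 2000000 in
/-- Lemma 5.3: there is a universal `C > 0` such that for `f ∈ ℤΓ` positive and invertible
in `ℒΓ`, `λ > 1`, `ε > 0`, there is `δ > 0` so that for every nonempty finite `F ⊆ Γ` with
`|K_f² F ∖ F| ≤ δ |F|` the group `ℤ^F / f_F ℤ^F` is finite and every `[F,2,ε]`-separated
subset `E` of `X_f` satisfies `card E ≤ C λ^{|F|} card(ℤ^F / f_F ℤ^F)`. -/
theorem stmt6 : ∃ C : ℝ, 0 < C ∧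
    ∀ (Γ : Type u) [Group Γ] [Countable Γ] [DecidableEq Γ],
    ∀ (f : MonoidAlgebra ℤ Γ) (T : l2 Γ →L[ℂ] l2 Γ),
      IsConvOp f T → T.IsPositive → IsUnit T →
      ∀ lam : ℝ, 1 < lam → ∀ ε : ℝ, 0 < ε → ∃ δ : ℝ, 0 < δ ∧
        ∀ F : Finset Γ, F.Nonempty →
          (((Kf f * (Kf f * F)) \ F).card : ℝ) ≤ δ * F.card →
          Finite ((↥F → ℤ) ⧸ LinearMap.range (fMat f F).mulVecLin) ∧
          ∀ E : Finset (Γ → AddCircle (1 : ℝ)), ↑E ⊆ Xset f →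
            (∀ x ∈ E, ∀ y ∈ E, x ≠ y → ε < d2 F x y) →
            (E.card : ℝ) ≤ C * lam ^ F.card *
              Nat.card ((↥F → ℤ) ⧸ LinearMap.range (fMat f F).mulVecLin) := by
  classical
  refine ⟨1, one_pos, ?_⟩
  intro Γ _ _ _ f T hconv hpos hunit lam hlam ε hε
  obtain ⟨c, hc0, hc⟩ := op_coercive hpos hunit
  set Ns : ℝ := (f.coeff.support.card : ℝ) with hNsdef
  have hNs : (0:ℝ) ≤ Ns := Nat.cast_nonneg _
  refine ⟨c ^ 2 * ε ^ 2 / (2 * (Ns + 1)), by positivity, ?_⟩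
  intro F hFne hFbound
  have hcoF := matrix_coercive f T hconv hc F
  set A : Matrix ↥F ↥F ℤ := fMat f F with hA
  set Aℝ : Matrix ↥F ↥F ℝ := A.map (Int.cast : ℤ → ℝ) with hAr
  -- kernel triviality over ℝ
  have hker : ∀ v : ↥F → ℝ, Aℝ.mulVec v = 0 → v = 0 := by
    intro v hv
    have h1 := hcoF v
    rw [hv] at h1
    simp only [Pi.zero_apply, mul_zero, Finset.sum_const_zero] at h1
    have h2 : ∑ γ : ↥F, v γ ^ 2 ≤ 0 := by
      by_contra h
      push_neg at h
      nlinarith [h1]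
    have h3 : ∀ γ : ↥F, v γ ^ 2 = 0 := by
      intro γ
      have := Finset.sum_nonneg (fun γ (_ : γ ∈ Finset.univ) => sq_nonneg (v γ))
      have h4 : ∑ γ : ↥F, v γ ^ 2 = 0 := le_antisymm h2 this
      have := (Finset.sum_eq_zero_iff_of_nonneg
        (fun γ (_ : γ ∈ Finset.univ) => sq_nonneg (v γ))).mp h4
      exact this γ (Finset.mem_univ γ)
    funext γ
    exact pow_eq_zero_iff (n := 2) (by norm_num) |>.mp (h3 γ)
  -- the determinant is nonzero
  have hdet : A.det ≠ 0 := by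
    intro h0
    have hdet0 : Aℝ.det = 0 := by
      have := RingHom.map_det (Int.castRingHom ℝ) A
      rw [h0] at this
      have h2 : Aℝ = (Int.castRingHom ℝ).mapMatrix A := rfl
      rw [h2, ← this]
      simp
    obtain ⟨v, hv0, hv⟩ := (Matrix.exists_mulVec_eq_zero_iff).mpr hdet0
    exact hv0 (hker v hv)
  set n : ℕ := A.det.natAbs with hn
  have hn0 : n ≠ 0 := Int.natAbs_ne_zero.mpr hdet
  haveI : NeZero n := ⟨hn0⟩
  -- vectors with entries divisible by the determinant are in the range
  have hdvd_mem : ∀ (Δ : ↥F → ℤ), (∀ i, A.det ∣ Δ i) →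
      Δ ∈ LinearMap.range A.mulVecLin := by
    intro Δ hΔ
    refine ⟨(A.adjugate).mulVec (fun i => Δ i / A.det), ?_⟩
    rw [Matrix.mulVecLin_apply, Matrix.mulVec_mulVec, Matrix.mul_adjugate,
      Matrix.smul_mulVec, Matrix.one_mulVec]
    funext i
    simp only [Pi.smul_apply, smul_eq_mul]
    exact Int.mul_ediv_cancel' (hΔ i)
  -- finiteness of the quotient
  have hfin : Finite ((↥F → ℤ) ⧸ LinearMap.range A.mulVecLin) := by
    have hsurj : Function.Surjective (fun v : ↥F → ZMod n =>
        (Submodule.Quotient.mk (p := LinearMap.range A.mulVecLin)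
          (fun i => ((v i).val : ℤ)))) := by
      intro q
      obtain ⟨u, rfl⟩ := Submodule.Quotient.mk_surjective _ q
      refine ⟨fun i => ((u i : ZMod n)), ?_⟩
      rw [Submodule.Quotient.eq]
      refine hdvd_mem _ fun i => ?_
      rw [← Int.natAbs_dvd, ← hn, ← ZMod.intCast_zmod_eq_zero_iff_dvd]
      push_cast [ZMod.natCast_val, ZMod.intCast_cast, ZMod.cast_id]
      simp
    exact Finite.of_surjective _ hsurj
  refine ⟨hfin, ?_⟩
  intro E hEX hEsep
  -- lifts
  set lft : (Γ → AddCircle (1:ℝ)) → ↥F → ℝ := fun h γ => (h (γ:Γ)).out with hlft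
  have hliftcoe : ∀ (h : Γ → AddCircle (1:ℝ)) (β : Γ),
      ((h β).out : AddCircle (1:ℝ)) = h β := fun h β => Quotient.out_eq _
  set yv : (Γ → AddCircle (1:ℝ)) → ↥F → ℝ := fun h => Aℝ.mulVec (lft h) with hyv
  set zv : (Γ → AddCircle (1:ℝ)) → ↥F → ℤ := fun h γ => round (yv h γ) with hzv
  set good : ↥F → Prop := fun γ => ∀ s ∈ f.coeff.support, s⁻¹ * (γ:Γ) ∈ F with hgood
  -- on good coordinates the compressed convolution takes integer values
  have hint : ∀ h ∈ E, ∀ γ : ↥F, good γ → ((zv h γ : ℝ)) = yv h γ := by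
    intro h hh γ hγ
    have hX : ∀ γ' : Γ, ∑ s ∈ f.coeff.support, f.coeff s • h (s⁻¹ * γ') = 0 :=
      hEX (Finset.mem_coe.mpr hh)
    have e0 : yv h γ = ∑ β ∈ F, f.coeff ((γ:Γ) * β⁻¹) • (h β).out := by
      rw [hyv]
      simp only [Matrix.mulVec, dotProduct, hAr, hA, fMat, Matrix.map_apply,
        Matrix.of_apply, zsmul_eq_mul, hlft]
      rw [← Finset.sum_coe_sort F (fun β => (f.coeff ((γ:Γ) * β⁻¹) : ℝ) * (h β).out)]
    have e1 : ((yv h γ : ℝ) : AddCircle (1:ℝ)) = 0 := by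
      rw [e0]
      have hπ : ((↑(∑ β ∈ F, f.coeff ((γ:Γ) * β⁻¹) • (h β).out) : AddCircle (1:ℝ)))
          = ∑ β ∈ F, f.coeff ((γ:Γ) * β⁻¹) • ((h β).out : AddCircle (1:ℝ)) := by
        exact map_sum (QuotientAddGroup.mk' (AddSubgroup.zmultiples (1:ℝ)))
          (fun β => f.coeff ((γ:Γ) * β⁻¹) • (h β).out) F
      rw [hπ]
      have : ∀ β ∈ F, (f.coeff ((γ:Γ) * β⁻¹) • ((h β).out : AddCircle (1:ℝ)))
          = f.coeff ((γ:Γ) * β⁻¹) • h β := by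
        intro β _
        rw [hliftcoe]
      rw [Finset.sum_congr rfl this]
      rw [← conv_reindex_mem f h F (γ:Γ) hγ]
      exact hX (γ:Γ)
    obtain ⟨m, hm⟩ := (AddCircle.coe_eq_zero_iff (1:ℝ)).mp e1
    have hm' : yv h γ = (m : ℝ) := by
      rw [← hm, zsmul_eq_mul, mul_one]
    rw [hzv]
    simp only [hm', round_intCast]
  -- the bad set
  set Bad : Finset ↥F := Finset.univ.filter (fun γ => ¬ good γ) with hBad
  have hBadcard : (Bad.card : ℝ) ≤ Ns * (((Kf f * (Kf f * F)) \ F).card : ℝ) := by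
    set D : Finset Γ := (Kf f * (Kf f * F)) \ F with hD
    have hwit : ∀ γ : ↥F, γ ∈ Bad → ∃ s, s ∈ f.coeff.support ∧ s⁻¹ * (γ:Γ) ∉ F := by
      intro γ hγ
      rw [hBad, Finset.mem_filter] at hγ
      have := hγ.2
      simp only [hgood] at this
      push_neg at this
      exact this
    have hcard : Bad.card ≤ (f.coeff.support ×ˢ D).card := by
      refine Finset.card_le_card_of_injOn
        (fun γ => if hγ : γ ∈ Bad then ((hwit γ hγ).choose,
          ((hwit γ hγ).choose)⁻¹ * (γ:Γ)) else (1,1)) ?_ ?_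
      · intro γ hγ
        rw [Finset.mem_coe] at hγ ⊢
        simp only [dif_pos hγ]
        obtain ⟨hs, hns⟩ := (hwit γ hγ).choose_spec
        rw [Finset.mem_product]
        constructor
        · exact hs
        · rw [hD, Finset.mem_sdiff]
          refine ⟨?_, hns⟩
          have h1K : (1:Γ) ∈ Kf f := by
            rw [Kf]
            exact Finset.mem_union_right _ (Finset.mem_singleton_self 1)
          have hsK : ((hwit γ hγ).choose)⁻¹ ∈ Kf f := by
            rw [Kf]
            exact Finset.mem_union_left _ (Finset.mem_union_right _
              (Finset.mem_image_of_mem _ hs))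
          have hγKF : (γ:Γ) ∈ Kf f * F := by
            have := Finset.mul_mem_mul h1K γ.2
            rwa [one_mul] at this
          exact Finset.mul_mem_mul hsK hγKF
      · intro γ hγ γ' hγ' heq
        rw [Finset.mem_coe] at hγ hγ'
        simp only [dif_pos hγ, dif_pos hγ'] at heq
        have h1 : (hwit γ hγ).choose = (hwit γ' hγ').choose := congrArg Prod.fst heq
        have h2 : ((hwit γ hγ).choose)⁻¹ * (γ:Γ) = ((hwit γ' hγ').choose)⁻¹ * (γ':Γ) :=
          congrArg Prod.snd heq
        rw [h1] at h2
        have : (γ:Γ) = (γ':Γ) := by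
          exact mul_left_cancel h2
        exact Subtype.ext this
    calc (Bad.card : ℝ) ≤ ((f.coeff.support ×ˢ D).card : ℝ) := by exact_mod_cast hcard
      _ = Ns * (D.card : ℝ) := by rw [Finset.card_product]; push_cast; rfl
  -- injectivity of the coset map on E
  have hinj : ∀ h ∈ E, ∀ h' ∈ E,
      (Submodule.Quotient.mk (p := LinearMap.range A.mulVecLin) (zv h)
        = Submodule.Quotient.mk (zv h')) → h = h' := by
    intro h hh h' hh' heq
    by_contra hne
    have hsep := hEsep h hh h' hh' hne
    rw [Submodule.Quotient.eq] at heq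
    obtain ⟨w, hw⟩ := heq
    rw [Matrix.mulVecLin_apply] at hw
    set uu : ↥F → ℝ := fun γ => lft h γ - lft h' γ - (w γ : ℝ) with huu
    have hAu : ∀ γ : ↥F, Aℝ.mulVec uu γ
        = (yv h γ - (zv h γ : ℝ)) - (yv h' γ - (zv h' γ : ℝ)) := by
      intro γ
      have huu2 : uu = (lft h - lft h') - (fun i => (w i : ℝ)) := by
        funext i
        simp [huu]
      rw [huu2, Matrix.mulVec_sub, Matrix.mulVec_sub]
      have h3 : Aℝ.mulVec (fun i => (w i : ℝ)) γ = ((A.mulVec w) γ : ℝ) := by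
        rw [hAr]; exact cast_mulVec A w γ
      simp only [Pi.sub_apply]
      rw [h3, hw, hyv]
      simp only [Pi.sub_apply]
      push_cast
      ring
    have hAu2 : ∑ γ : ↥F, (Aℝ.mulVec uu γ) ^ 2 ≤ (Bad.card : ℝ) := by
      have hle : ∀ γ : ↥F, (Aℝ.mulVec uu γ) ^ 2 ≤ (if γ ∈ Bad then (1:ℝ) else 0) := by
        intro γ
        by_cases hγ : γ ∈ Bad
        · rw [if_pos hγ, hAu γ]
          have b1 := abs_sub_round (yv h γ)
          have b2 := abs_sub_round (yv h' γ)
          rw [hzv]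
          rw [abs_le] at b1 b2
          nlinarith [b1.1, b1.2, b2.1, b2.2]
        · have hγg : good γ := by
            rw [hBad, Finset.mem_filter] at hγ
            push_neg at hγ
            exact hγ (Finset.mem_univ γ)
          rw [if_neg hγ, hAu γ, hint h hh γ hγg, hint h' hh' γ hγg]
          simp
      calc ∑ γ : ↥F, (Aℝ.mulVec uu γ) ^ 2
          ≤ ∑ γ : ↥F, (if γ ∈ Bad then (1:ℝ) else 0) := Finset.sum_le_sum fun γ _ => hle γ
        _ = (Bad.card : ℝ) := by
            rw [Finset.sum_ite_mem, Finset.univ_inter, Finset.sum_const, nsmul_eq_mul, mul_one]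
    have hCS := Finset.sum_mul_sq_le_sq_mul_sq Finset.univ uu (Aℝ.mulVec uu)
    have hco := hcoF uu
    have hu2 : c ^ 2 * ∑ γ : ↥F, uu γ ^ 2 ≤ ∑ γ : ↥F, (Aℝ.mulVec uu γ) ^ 2 := by
      rcases eq_or_lt_of_le (Finset.sum_nonneg
        (fun γ (_ : γ ∈ Finset.univ) => sq_nonneg (uu γ))) with h0 | h0
      · rw [← h0, mul_zero]
        exact Finset.sum_nonneg fun γ _ => sq_nonneg _
      · have hcS : 0 ≤ c * ∑ γ : ↥F, uu γ ^ 2 := by positivity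
        have h1 : (c * ∑ γ : ↥F, uu γ ^ 2) * (c * ∑ γ : ↥F, uu γ ^ 2)
            ≤ (∑ γ : ↥F, uu γ * Aℝ.mulVec uu γ) * (∑ γ : ↥F, uu γ * Aℝ.mulVec uu γ) :=
          mul_self_le_mul_self hcS hco
        have h3 : (c ^ 2 * ∑ γ : ↥F, uu γ ^ 2 - ∑ γ : ↥F, (Aℝ.mulVec uu γ) ^ 2)
            * (∑ γ : ↥F, uu γ ^ 2) ≤ 0 := by nlinarith [h1, hCS]
        nlinarith [h3, h0]
    -- distance bound
    have hdist : ∀ γ : ↥F, dist (h (γ:Γ)) (h' (γ:Γ)) ≤ |uu γ| := by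
      intro γ
      have hcoe : h (γ:Γ) - h' (γ:Γ) = ((uu γ : ℝ) : AddCircle (1:ℝ)) := by
        have e1 : ((lft h γ : ℝ) : AddCircle (1:ℝ)) = h (γ:Γ) := hliftcoe h (γ:Γ)
        have e2 : ((lft h' γ : ℝ) : AddCircle (1:ℝ)) = h' (γ:Γ) := hliftcoe h' (γ:Γ)
        have e3 : ((w γ : ℝ) : AddCircle (1:ℝ)) = 0 := by
          rw [AddCircle.coe_eq_zero_iff]
          exact ⟨w γ, by rw [zsmul_eq_mul, mul_one]⟩
        have e4 : (uu γ : ℝ) = lft h γ - lft h' γ - (w γ : ℝ) := rfl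
        have e5 : ((uu γ : ℝ) : AddCircle (1:ℝ))
            = ((lft h γ : ℝ) : AddCircle (1:ℝ)) - ((lft h' γ : ℝ) : AddCircle (1:ℝ))
              - (((w γ : ℝ) : ℝ) : AddCircle (1:ℝ)) := by
          rw [e4, AddCircle.coe_sub, AddCircle.coe_sub]
        rw [e5, e1, e2, e3, sub_zero]
      rw [dist_eq_norm, hcoe]
      calc ‖((uu γ : ℝ) : AddCircle (1:ℝ))‖ ≤ ‖uu γ‖ :=
            QuotientAddGroup.norm_mk_le_norm (S := AddSubgroup.zmultiples (1:ℝ)) (m := uu γ)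
        _ = |uu γ| := Real.norm_eq_abs _
    have hkey : c ^ 2 * ∑ γ ∈ F, dist (h γ) (h' γ) ^ 2 ≤ (Bad.card : ℝ) := by
      have hs1 : ∑ γ ∈ F, dist (h γ) (h' γ) ^ 2 = ∑ γ : ↥F, dist (h (γ:Γ)) (h' (γ:Γ)) ^ 2 :=
        (Finset.sum_coe_sort F (fun γ => dist (h γ) (h' γ) ^ 2)).symm
      have hs2 : ∑ γ : ↥F, dist (h (γ:Γ)) (h' (γ:Γ)) ^ 2 ≤ ∑ γ : ↥F, uu γ ^ 2 := by
        refine Finset.sum_le_sum fun γ _ => ?_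
        have h5 := hdist γ
        have hd0 : (0:ℝ) ≤ dist (h (γ:Γ)) (h' (γ:Γ)) := dist_nonneg
        calc dist (h (γ:Γ)) (h' (γ:Γ)) ^ 2 ≤ |uu γ| ^ 2 :=
              pow_le_pow_left₀ hd0 h5 2
          _ = uu γ ^ 2 := sq_abs (uu γ)
      calc c ^ 2 * ∑ γ ∈ F, dist (h γ) (h' γ) ^ 2
          = c ^ 2 * ∑ γ : ↥F, dist (h (γ:Γ)) (h' (γ:Γ)) ^ 2 := by rw [hs1]
        _ ≤ c ^ 2 * ∑ γ : ↥F, uu γ ^ 2 := by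
            exact mul_le_mul_of_nonneg_left hs2 (sq_nonneg c)
        _ ≤ ∑ γ : ↥F, (Aℝ.mulVec uu γ) ^ 2 := hu2
        _ ≤ (Bad.card : ℝ) := hAu2
    -- numeric contradiction
    have hF0 : (0:ℝ) < (F.card : ℝ) := by exact_mod_cast hFne.card_pos
    have hd2 : ε ^ 2 < (F.card : ℝ)⁻¹ * ∑ γ ∈ F, dist (h γ) (h' γ) ^ 2 := by
      have hnn : (0:ℝ) ≤ (F.card : ℝ)⁻¹ * ∑ γ ∈ F, dist (h γ) (h' γ) ^ 2 := by
        have : (0:ℝ) ≤ ∑ γ ∈ F, dist (h γ) (h' γ) ^ 2 :=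
          Finset.sum_nonneg fun γ _ => sq_nonneg _
        positivity
      rw [d2] at hsep
      exact (Real.lt_sqrt hε.le).mp hsep
    have hd2' : ε ^ 2 * (F.card : ℝ) < ∑ γ ∈ F, dist (h γ) (h' γ) ^ 2 := by
      rw [inv_mul_eq_div] at hd2
      exact (lt_div_iff₀ hF0).mp hd2
    have hfinal : (Bad.card : ℝ) ≤ (c ^ 2 * ε ^ 2 / 2) * (F.card : ℝ) := by
      have step1 : (Bad.card : ℝ)
          ≤ Ns * (c ^ 2 * ε ^ 2 / (2 * (Ns + 1)) * (F.card : ℝ)) := by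
        calc (Bad.card : ℝ) ≤ Ns * (((Kf f * (Kf f * F)) \ F).card : ℝ) := hBadcard
          _ ≤ Ns * (c ^ 2 * ε ^ 2 / (2 * (Ns + 1)) * (F.card : ℝ)) :=
              mul_le_mul_of_nonneg_left hFbound hNs
      have step2 : Ns * (c ^ 2 * ε ^ 2 / (2 * (Ns + 1)) * (F.card : ℝ))
          ≤ (c ^ 2 * ε ^ 2 / 2) * (F.card : ℝ) := by
        rw [div_mul_eq_mul_div, div_mul_eq_mul_div, mul_div_assoc']
        rw [div_le_div_iff₀ (by positivity) (by norm_num)]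
        nlinarith [hNs, hF0.le, sq_nonneg c, sq_nonneg ε, mul_nonneg (sq_nonneg c) (sq_nonneg ε),
          mul_nonneg (mul_nonneg (sq_nonneg c) (sq_nonneg ε)) hF0.le,
          mul_nonneg (mul_nonneg (mul_nonneg (sq_nonneg c) (sq_nonneg ε)) hF0.le) hNs]
      linarith
    nlinarith [hkey, hd2', hfinal, mul_pos (mul_pos (pow_pos hc0 2) (pow_pos hε 2)) hF0]
  -- conclude by counting
  have hcard : (E.card : ℝ)
      ≤ (Nat.card ((↥F → ℤ) ⧸ LinearMap.range A.mulVecLin) : ℝ) := by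
    haveI := hfin
    have hinj2 : Function.Injective (fun h : ↥E =>
        (Submodule.Quotient.mk (p := LinearMap.range A.mulVecLin) (zv ↑h))) := by
      intro h h' hhh
      exact Subtype.ext (hinj _ h.2 _ h'.2 hhh)
    have hle := Nat.card_le_card_of_injective _ hinj2
    rw [Nat.card_eq_finsetCard] at hle
    exact_mod_cast hle
  have hpow : (1:ℝ) ≤ lam ^ F.card := one_le_pow₀ hlam.le
  have hQ : (0:ℝ) ≤ (Nat.card ((↥F → ℤ) ⧸ LinearMap.range A.mulVecLin) : ℝ) :=
    Nat.cast_nonneg _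
  calc (E.card : ℝ) ≤ (Nat.card ((↥F → ℤ) ⧸ LinearMap.range A.mulVecLin) : ℝ) := hcard
    _ ≤ 1 * lam ^ F.card * (Nat.card ((↥F → ℤ) ⧸ LinearMap.range A.mulVecLin) : ℝ) := by
        nlinarith [hpow, hQ]
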